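/- For every σ > 0, M ≥ 1 and ε > 0 there exists δ ∈ (0, σ] with the following property: if q, y : [0,∞) → [0,∞) are locally bounded functions and γ ≥ 0 is a constant such that q(t) ≤ max( M·exp(−σ(t−t₀))·q(t₀), γ·sup_{t₀≤s≤t} y(s) ) for all 0 ≤ t₀ ≤ t, then q(t) ≤ max( M·exp(−δt)·q(0), γ(1+ε)·sup_{0≤s≤t}( y(s)·exp(−δ(t−s)) ) ) for all t ≥ 0. -/

import Mathlib

open Real Set

theorem stmt_2 (σ M ε : ℝ) (hσ : 0 < σ) (hM : 1 ≤ M) (hε : 0 < ε) :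
    ∃ δ : ℝ, δ ∈ Set.Ioc 0 σ ∧
      ∀ (q y : ℝ → ℝ) (γ : ℝ), 0 ≤ γ →
        (∀ t, 0 ≤ q t) → (∀ t, 0 ≤ y t) →
        (∀ T : ℝ, BddAbove (q '' Set.Icc 0 T) ∧ BddAbove (y '' Set.Icc 0 T)) →
        (∀ t₀ t : ℝ, 0 ≤ t₀ → t₀ ≤ t →
          q t ≤ max (M * Real.exp (-σ * (t - t₀)) * q t₀) (γ * sSup (y '' Set.Icc t₀ t))) →
        ∀ t : ℝ, 0 ≤ t →
          q t ≤ max (M * Real.exp (-δ * t) * q 0)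
            (γ * (1 + ε) * sSup ((fun s => y s * Real.exp (-δ * (t - s))) '' Set.Icc 0 t)) := by
  have hM0 : (0:ℝ) < M := lt_of_lt_of_le one_pos hM
  have hlogM : 0 ≤ Real.log M := Real.log_nonneg hM
  set T : ℝ := (2 * Real.log M + 1) / σ with hTdef
  have hT : 0 < T := by positivity
  have hσT : σ * T = 2 * Real.log M + 1 := by
    rw [hTdef]; field_simp
  have hlε : 0 < Real.log (1 + ε) := Real.log_pos (by linarith)
  set δ : ℝ := min (σ / 2) (Real.log (1 + ε) / T) with hδdef
  have hδpos : 0 < δ := lt_min (by linarith) (by positivity)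
  have hδσ2 : δ ≤ σ / 2 := min_le_left _ _
  have hA : M * Real.exp (-σ * T) * Real.exp (δ * T) ≤ 1 := by
    have h1 : δ * T ≤ (σ / 2) * T := by nlinarith
    have h2 : -σ * T + δ * T ≤ -(Real.log M) := by nlinarith
    have h3 : Real.exp (-σ * T) * Real.exp (δ * T) ≤ Real.exp (-(Real.log M)) := by
      rw [← Real.exp_add]
      exact Real.exp_le_exp.mpr h2
    have h4 : Real.exp (-(Real.log M)) = M⁻¹ := by
      rw [Real.exp_neg, Real.exp_log hM0]
    have h5 : M * (Real.exp (-σ * T) * Real.exp (δ * T)) ≤ M * M⁻¹ := by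
      rw [← h4]; exact mul_le_mul_of_nonneg_left h3 hM0.le
    rw [mul_inv_cancel₀ (ne_of_gt hM0)] at h5
    linarith [h5, mul_assoc M (Real.exp (-σ * T)) (Real.exp (δ * T))]
  have hB : Real.exp (δ * T) ≤ 1 + ε := by
    have h1 : δ ≤ Real.log (1 + ε) / T := min_le_right _ _
    have h2 : δ * T ≤ Real.log (1 + ε) := by
      rw [← le_div_iff₀ hT] at *; exact h1
    calc Real.exp (δ * T) ≤ Real.exp (Real.log (1 + ε)) := Real.exp_le_exp.mpr h2
      _ = 1 + ε := Real.exp_log (by linarith)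
  refine ⟨δ, ⟨hδpos, by linarith⟩, ?_⟩
  intro q y γ hγ hq hy hbdd hyp
  -- abbreviation for the target sup
  have hbddS : ∀ t : ℝ, 0 ≤ t →
      BddAbove ((fun s => y s * Real.exp (-δ * (t - s))) '' Set.Icc 0 t) := by
    intro t ht
    obtain ⟨B, hB'⟩ := (hbdd t).2
    refine ⟨B, ?_⟩
    rintro x ⟨s, hs, rfl⟩
    have hyB : y s ≤ B := hB' ⟨s, hs, rfl⟩
    show y s * Real.exp (-δ * (t - s)) ≤ B
    have he : Real.exp (-δ * (t - s)) ≤ 1 := by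
      rw [Real.exp_le_one_iff]
      nlinarith [hs.1, hs.2]
    nlinarith [hy s, Real.exp_pos (-δ * (t - s))]
  have hmemS : ∀ t s : ℝ, 0 ≤ s → s ≤ t →
      y s * Real.exp (-δ * (t - s)) ≤
        sSup ((fun u => y u * Real.exp (-δ * (t - u))) '' Set.Icc 0 t) := by
    intro t s hs hst
    exact le_csSup (hbddS t (hs.trans hst)) ⟨s, ⟨hs, hst⟩, rfl⟩
  have hSnn : ∀ t : ℝ, 0 ≤ t →
      0 ≤ sSup ((fun u => y u * Real.exp (-δ * (t - u))) '' Set.Icc 0 t) := by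
    intro t ht
    have h0 : 0 ≤ y 0 * Real.exp (-δ * (t - 0)) :=
      mul_nonneg (hy 0) (Real.exp_pos _).le
    exact h0.trans (hmemS t 0 le_rfl ht)
  have hyS : ∀ t s : ℝ, 0 ≤ s → s ≤ t → t - s ≤ T →
      y s ≤ (1 + ε) * sSup ((fun u => y u * Real.exp (-δ * (t - u))) '' Set.Icc 0 t) := by
    intro t s hs hst hTs
    have h1 := hmemS t s hs hst
    have h2 : Real.exp (δ * (t - s)) ≤ 1 + ε := by
      refine le_trans (Real.exp_le_exp.mpr ?_) hB
      nlinarith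
    calc y s = (y s * Real.exp (-δ * (t - s))) * Real.exp (δ * (t - s)) := by
          rw [mul_assoc, ← Real.exp_add, show -δ * (t - s) + δ * (t - s) = 0 by ring,
            Real.exp_zero, mul_one]
      _ ≤ sSup ((fun u => y u * Real.exp (-δ * (t - u))) '' Set.Icc 0 t) *
            Real.exp (δ * (t - s)) :=
          mul_le_mul_of_nonneg_right h1 (Real.exp_pos _).le
      _ ≤ sSup ((fun u => y u * Real.exp (-δ * (t - u))) '' Set.Icc 0 t) * (1 + ε) :=
          mul_le_mul_of_nonneg_left h2 (hSnn t (hs.trans hst))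
      _ = (1 + ε) * sSup ((fun u => y u * Real.exp (-δ * (t - u))) '' Set.Icc 0 t) :=
          mul_comm _ _
  have case1 : ∀ t : ℝ, 0 ≤ t → t ≤ T →
      q t ≤ max (M * Real.exp (-δ * t) * q 0)
        (γ * (1 + ε) * sSup ((fun s => y s * Real.exp (-δ * (t - s))) '' Set.Icc 0 t)) := by
    intro t ht htT
    refine (hyp 0 t le_rfl ht).trans (max_le_max ?_ ?_)
    · have he : Real.exp (-σ * (t - 0)) ≤ Real.exp (-δ * t) := by
        apply Real.exp_le_exp.mpr; nlinarith
      exact mul_le_mul_of_nonneg_right (mul_le_mul_of_nonneg_left he hM0.le) (hq 0)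
    · have hs : sSup (y '' Set.Icc 0 t) ≤
          (1 + ε) * sSup ((fun s => y s * Real.exp (-δ * (t - s))) '' Set.Icc 0 t) := by
        apply Real.sSup_le
        · rintro x ⟨s, hs, rfl⟩
          exact hyS t s hs.1 hs.2 (by linarith [hs.1])
        · exact mul_nonneg (by linarith) (hSnn t ht)
      calc γ * sSup (y '' Set.Icc 0 t)
          ≤ γ * ((1 + ε) * sSup ((fun s => y s * Real.exp (-δ * (t - s))) '' Set.Icc 0 t)) :=
            mul_le_mul_of_nonneg_left hs hγ
        _ = γ * (1 + ε) * sSup ((fun s => y s * Real.exp (-δ * (t - s))) '' Set.Icc 0 t) := by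
            ring
  have main : ∀ k : ℕ, ∀ t : ℝ, 0 ≤ t → t ≤ ((k : ℝ) + 1) * T →
      q t ≤ max (M * Real.exp (-δ * t) * q 0)
        (γ * (1 + ε) * sSup ((fun s => y s * Real.exp (-δ * (t - s))) '' Set.Icc 0 t)) := by
    intro k
    induction k with
    | zero =>
      intro t ht htT
      exact case1 t ht (by push_cast at htT; linarith)
    | succ k ih =>
      intro t ht htT
      by_cases hcase : t ≤ T
      · exact case1 t ht hcase
      · push_neg at hcase
        have ht0 : (0:ℝ) ≤ t - T := by linarith
        have hTt : t - T ≤ ((k : ℝ) + 1) * T := by push_cast at htT ⊢; linarith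
        have ihq := ih (t - T) ht0 hTt
        have h := hyp (t - T) t ht0 (by linarith)
        rw [show t - (t - T) = T by ring] at h
        refine h.trans (max_le ?_ ?_)
        · have c : M * Real.exp (-σ * T) * q (t - T) ≤
              M * Real.exp (-σ * T) *
                max (M * Real.exp (-δ * (t - T)) * q 0)
                  (γ * (1 + ε) *
                    sSup ((fun s => y s * Real.exp (-δ * (t - T - s))) '' Set.Icc 0 (t - T))) :=
            mul_le_mul_of_nonneg_left ihq (by positivity)
          refine c.trans ?_
          rw [mul_max_of_nonneg _ _ (by positivity : (0:ℝ) ≤ M * Real.exp (-σ * T))]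
          apply max_le_max
          · -- decay term
            have key1 : M * Real.exp (-σ * T) * (M * Real.exp (-δ * (t - T))) ≤
                M * Real.exp (-δ * t) := by
              have he : Real.exp (-δ * (t - T)) = Real.exp (δ * T) * Real.exp (-δ * t) := by
                rw [← Real.exp_add]; ring_nf
              rw [he]
              nlinarith [mul_le_mul_of_nonneg_right hA
                (by positivity : (0:ℝ) ≤ M * Real.exp (-δ * t))]
            calc M * Real.exp (-σ * T) * (M * Real.exp (-δ * (t - T)) * q 0)
                = (M * Real.exp (-σ * T) * (M * Real.exp (-δ * (t - T)))) * q 0 := by ring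
              _ ≤ (M * Real.exp (-δ * t)) * q 0 := mul_le_mul_of_nonneg_right key1 (hq 0)
          · -- sup term
            have hshift :
                sSup ((fun s => y s * Real.exp (-δ * (t - T - s))) '' Set.Icc 0 (t - T)) ≤
                  Real.exp (δ * T) *
                    sSup ((fun s => y s * Real.exp (-δ * (t - s))) '' Set.Icc 0 t) := by
              apply Real.sSup_le
              · rintro x ⟨s, hs, rfl⟩
                show y s * Real.exp (-δ * (t - T - s)) ≤ _
                have he : y s * Real.exp (-δ * (t - T - s)) =
                    Real.exp (δ * T) * (y s * Real.exp (-δ * (t - s))) := by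
                  rw [show -δ * (t - T - s) = δ * T + -δ * (t - s) by ring, Real.exp_add]
                  ring
                rw [he]
                exact mul_le_mul_of_nonneg_left
                  (hmemS t s hs.1 (by linarith [hs.2])) (Real.exp_pos _).le
              · exact mul_nonneg (Real.exp_pos _).le (hSnn t (by linarith))
            have hSt := hSnn t (by linarith)
            calc M * Real.exp (-σ * T) *
                  (γ * (1 + ε) *
                    sSup ((fun s => y s * Real.exp (-δ * (t - T - s))) '' Set.Icc 0 (t - T)))
                ≤ M * Real.exp (-σ * T) *
                  (γ * (1 + ε) * (Real.exp (δ * T) *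
                    sSup ((fun s => y s * Real.exp (-δ * (t - s))) '' Set.Icc 0 t))) := by
                  apply mul_le_mul_of_nonneg_left _ (by positivity : (0:ℝ) ≤ M * Real.exp (-σ * T))
                  exact mul_le_mul_of_nonneg_left hshift
                    (by positivity : (0:ℝ) ≤ γ * (1 + ε))
              _ = (M * Real.exp (-σ * T) * Real.exp (δ * T)) *
                  (γ * (1 + ε) *
                    sSup ((fun s => y s * Real.exp (-δ * (t - s))) '' Set.Icc 0 t)) := by ring
              _ ≤ 1 * (γ * (1 + ε) *
                    sSup ((fun s => y s * Real.exp (-δ * (t - s))) '' Set.Icc 0 t)) :=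
                  mul_le_mul_of_nonneg_right hA
                    (mul_nonneg (mul_nonneg hγ (by linarith)) hSt)
              _ = γ * (1 + ε) *
                    sSup ((fun s => y s * Real.exp (-δ * (t - s))) '' Set.Icc 0 t) := one_mul _
        · refine le_trans ?_ (le_max_right _ _)
          have hs : sSup (y '' Set.Icc (t - T) t) ≤
              (1 + ε) * sSup ((fun s => y s * Real.exp (-δ * (t - s))) '' Set.Icc 0 t) := by
            apply Real.sSup_le
            · rintro x ⟨s, hs, rfl⟩
              exact hyS t s (by linarith [hs.1]) hs.2 (by linarith [hs.1])
            · exact mul_nonneg (by linarith) (hSnn t (by linarith))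
          calc γ * sSup (y '' Set.Icc (t - T) t)
              ≤ γ * ((1 + ε) *
                  sSup ((fun s => y s * Real.exp (-δ * (t - s))) '' Set.Icc 0 t)) :=
                mul_le_mul_of_nonneg_left hs hγ
            _ = γ * (1 + ε) *
                  sSup ((fun s => y s * Real.exp (-δ * (t - s))) '' Set.Icc 0 t) := by ring
  intro t ht
  obtain ⟨n, hn⟩ := exists_nat_ge (t / T)
  have htn : t ≤ ((n : ℝ) + 1) * T := by
    have h1 : t ≤ (n : ℝ) * T := by
      rw [div_le_iff₀ hT] at hn; linarith
    nlinarith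
  exact main n t ht htn
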